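/- Let G act faithfully and primitively on Ω, with G not cyclic, let F be a field, and let U be a G-invariant subspace of the permutation module F^Ω = (Ω →₀ F) with dim_F((Ω →₀ F)/U) ≥ 2. Then G acts faithfully on the quotient (Ω →₀ F)/U: if g ∈ G fixes every coset x + U (i.e. g • x − x ∈ U for all x ∈ Ω →₀ F), then g = 1. -/

import Mathlib

/-- A representation of the action of `G` on `Ω` over the field `F`:
an injective map `φ : Ω → V` intertwining the `G`-action on `Ω` with a linear
`G`-action `ρ` on `V`. -/
def IsActionRep (F : Type*) [Field F] {G : Type*} [Group G] {Ω : Type*} [MulAction G Ω]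
    {V : Type*} [AddCommGroup V] [Module F V]
    (ρ : G →* (V ≃ₗ[F] V)) (φ : Ω → V) : Prop :=
  Function.Injective φ ∧ ∀ (g : G) (ω : Ω), φ (g • ω) = ρ g (φ ω)

/-- The `F`-linear dimension of the action of `G` on `Ω`: the infimum (in `ℕ∞`) of the
dimensions of finite-dimensional `F`-vector spaces affording a representation of the action. -/
noncomputable def lindim (F : Type*) [Field F] (G : Type*) [Group G] (Ω : Type*)
    [MulAction G Ω] : ℕ∞ :=
  ⨅ (n : ℕ) (_ : ∃ (ρ : G →* ((Fin n → F) ≃ₗ[F] (Fin n → F))) (φ : Ω → (Fin n → F)),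
      IsActionRep F ρ φ), (n : ℕ∞)


/-- The action of `G` on `Ω` is primitive: it is transitive and every `G`-block is trivial. -/
def IsPrimitiveAction (G : Type*) [Group G] (Ω : Type*) [MulAction G Ω] : Prop :=
  MulAction.IsPretransitive G Ω ∧
    ∀ B : Set Ω, MulAction.IsBlock G B → MulAction.IsTrivialBlock B

/-- Let `G` act faithfully and primitively on `Ω`, with `G` not cyclic, and
let `U` be a `G`-invariant subspace of the permutation module `Ω →₀ F` whose quotient has
dimension at least `2`. Then `G` acts faithfully on the quotient `(Ω →₀ F) ⧸ U`. -/
theorem faithful_on_quotient_of_permutation_module (F : Type*) [Field F] (G : Type*) [Group G]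
    (Ω : Type*) [MulAction G Ω] [FaithfulSMul G Ω]
    (hprim : IsPrimitiveAction G Ω) (hnc : ¬ IsCyclic G)
    (U : Submodule F (Ω →₀ F))
    (hU : ∀ (g : G), ∀ x ∈ U, Finsupp.lmapDomain F F (fun ω : Ω => g • ω) x ∈ U)
    (hcodim : 2 ≤ Module.rank F ((Ω →₀ F) ⧸ U)) :
    ∀ g : G, (∀ x : Ω →₀ F, Finsupp.lmapDomain F F (fun ω : Ω => g • ω) x - x ∈ U) →
      g = 1 := by
  intro g hg
  apply FaithfulSMul.eq_of_smul_eq_smul (α := Ω)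
  intro ω₀
  rw [one_smul]
  by_contra hne
  -- key: action on singles
  have hsub : ∀ (h : G) (α β : Ω), Finsupp.single α (1 : F) - Finsupp.single β 1 ∈ U →
      Finsupp.single (h • α) (1 : F) - Finsupp.single (h • β) 1 ∈ U := by
    intro h α β hmem
    have := hU h _ hmem
    rw [map_sub] at this
    simpa [Finsupp.lmapDomain_apply, Finsupp.mapDomain_single] using this
  set B : Set Ω := {ω | Finsupp.single ω (1 : F) - Finsupp.single ω₀ 1 ∈ U} with hB
  have hω₀B : ω₀ ∈ B := by simp [hB]
  have hgω₀B : g • ω₀ ∈ B := by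
    have := hg (Finsupp.single ω₀ 1)
    simpa [hB, Finsupp.mapDomain_single] using this
  have hblock : MulAction.IsBlock G B := by
    rw [MulAction.isBlock_iff_smul_eq_of_mem]
    intro h a haB hhaB
    -- first: single (h • ω₀) - single ω₀ ∈ U
    have c1 : Finsupp.single (h • ω₀) (1 : F) - Finsupp.single ω₀ 1 ∈ U := by
      have h1 := hsub h a ω₀ haB
      have := U.sub_mem hhaB h1
      simpa using this
    have c2 : Finsupp.single (h⁻¹ • ω₀) (1 : F) - Finsupp.single ω₀ 1 ∈ U := by
      have := hsub h⁻¹ (h • ω₀) ω₀ c1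
      simp only [inv_smul_smul] at this
      simpa using U.neg_mem this
    ext ω'
    rw [Set.mem_smul_set_iff_inv_smul_mem]
    constructor
    · intro hm
      have h1 := hsub h (h⁻¹ • ω') ω₀ hm
      simp only [smul_inv_smul] at h1
      have := U.add_mem h1 c1
      simpa [hB, sub_add_sub_cancel] using this
    · intro hm
      have h1 := hsub h⁻¹ ω' ω₀ hm
      have := U.add_mem h1 c2
      simpa [hB, sub_add_sub_cancel] using this
  have htriv := hprim.2 B hblock
  have hBuniv : B = Set.univ := by
    rcases htriv with hsing | huniv
    · exact absurd (hsing hgω₀B hω₀B) hne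
    · exact huniv
  -- every single is congruent to single ω₀ mod U
  have hall : ∀ ω : Ω, (Submodule.Quotient.mk (Finsupp.single ω (1 : F)) :
      (Ω →₀ F) ⧸ U) = Submodule.Quotient.mk (Finsupp.single ω₀ 1) := by
    intro ω
    have : ω ∈ B := hBuniv ▸ Set.mem_univ ω
    exact (Submodule.Quotient.eq U).2 this
  -- quotient spanned by a single element
  have hspan : (⊤ : Submodule F ((Ω →₀ F) ⧸ U)) =
      Submodule.span F {(Submodule.Quotient.mk (Finsupp.single ω₀ (1 : F)) : (Ω →₀ F) ⧸ U)} := by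
    refine le_antisymm ?_ le_top
    rintro x -
    obtain ⟨y, rfl⟩ := Submodule.Quotient.mk_surjective U x
    induction y using Finsupp.induction with
    | zero => simp
    | single_add a b f _ _ ih =>
      rw [Submodule.Quotient.mk_add]
      refine Submodule.add_mem _ ?_ ih
      have : Finsupp.single a b = b • Finsupp.single a (1 : F) := by
        rw [Finsupp.smul_single, smul_eq_mul, mul_one]
      rw [this, Submodule.Quotient.mk_smul, hall a]
      exact Submodule.smul_mem _ _ (Submodule.mem_span_singleton_self _)
  have hrank : Module.rank F ((Ω →₀ F) ⧸ U) ≤ 1 := by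
    calc Module.rank F ((Ω →₀ F) ⧸ U)
        = Module.rank F (⊤ : Submodule F ((Ω →₀ F) ⧸ U)) := (rank_top F _).symm
      _ = Module.rank F (Submodule.span F
            {(Submodule.Quotient.mk (Finsupp.single ω₀ (1 : F)) : (Ω →₀ F) ⧸ U)}) := by rw [hspan]
      _ ≤ 1 := by
            simpa using rank_span_le (R := F)
              ({(Submodule.Quotient.mk (Finsupp.single ω₀ (1 : F)) : (Ω →₀ F) ⧸ U)} : Set _)
  have : (2 : Cardinal) ≤ 1 := hcodim.trans hrank
  norm_num at this
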